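/- Let 𝒴 ⊆ ℂⁿ be a p-dimensional subspace, let t ∈ {p, …, n−1} and i ∈ {1, …, p}, assume the smallest Ritz value η_p of A in 𝒴 satisfies η_p > λ_{t+1}, and let f : ℝ → ℝ satisfy |f(λ₁)| ≥ ⋯ ≥ |f(λ_t)| > max_{j ∈ {t+1, …, n}} |f(λⱼ)|. Then 𝒴' = f(A)𝒴 has dimension p, and its i-th largest Ritz value η'_i satisfies: either η'_i ≥ λ_{t−p+i}, or 0 < (λ_{t−p+i} − η'_i)/(η'_i − λ_{t+1}) ≤ ((max_{j ∈ {t+1, …, n}} |f(λⱼ)|)² / |f(λ_{t−p+i})|²) · (λ_{t−p+i} − η_p)/(η_p − λ_{t+1}). -/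

import Mathlib

/-- The Rayleigh quotient `ρ(v) = (vᴴAv)/(vᴴv)` of the Hermitian matrix `A`. -/
noncomputable def rayleigh {n : ℕ} (A : Matrix (Fin n) (Fin n) ℂ)
    (v : EuclideanSpace ℂ (Fin n)) : ℝ :=
  ((inner ℂ v (Matrix.toEuclideanLin A v) : ℂ)).re / ‖v‖ ^ 2

/-- The `i`-th largest Ritz value (1-indexed, `i ∈ {1, …, dim S}`) of the Hermitian
matrix `A` in the subspace `S`, characterized via the Courant–Fischer max-min
principle applied inside `S` (equivalently, the `i`-th largest eigenvalue of
`SᴴAS` for any orthonormal basis matrix `S`). -/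
noncomputable def ritzValue {n : ℕ} (A : Matrix (Fin n) (Fin n) ℂ)
    (S : Submodule ℂ (EuclideanSpace ℂ (Fin n))) (i : ℕ) : ℝ :=
  sSup {r : ℝ | ∃ T : Submodule ℂ (EuclideanSpace ℂ (Fin n)), T ≤ S ∧
    Module.finrank ℂ T = i ∧ ∀ v ∈ T, v ≠ 0 → r ≤ rayleigh A v}

/-- `f(A) = ∑ j, f(λ_j) x_j x_jᴴ` as a linear operator, for eigenvalues `lam`
and orthonormal eigenvectors `x` of `A`. -/
noncomputable def matFun {n : ℕ} (lam : Fin n → ℝ)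
    (x : Fin n → EuclideanSpace ℂ (Fin n)) (f : ℝ → ℝ) :
    EuclideanSpace ℂ (Fin n) →ₗ[ℂ] EuclideanSpace ℂ (Fin n) :=
  ∑ j : Fin n, (f (lam j) : ℂ) • ((innerSL ℂ (x j)).toLinearMap.smulRight (x j))

/-- `y` is a Ritz vector of `A` in `S` associated with the Ritz value `η`:
`y ∈ S`, `y ≠ 0`, `ρ(y) = η` and `Ay − ηy ⊥ S`. -/
def IsRitzVector {n : ℕ} (A : Matrix (Fin n) (Fin n) ℂ)
    (S : Submodule ℂ (EuclideanSpace ℂ (Fin n))) (η : ℝ)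
    (y : EuclideanSpace ℂ (Fin n)) : Prop :=
  y ∈ S ∧ y ≠ 0 ∧ rayleigh A y = η ∧
    ∀ v ∈ S, (inner ℂ v (Matrix.toEuclideanLin A y - (η : ℂ) • y) : ℂ) = 0

open Module Finset

/-! ### Auxiliary lemmas -/

lemma stmt13_conj_mul_re (c : ℂ) (r : ℝ) :
    ((starRingEnd ℂ) c * ((r:ℂ) * c)).re = r * ‖c‖ ^ 2 := by
  have h : (starRingEnd ℂ) c * ((r:ℂ) * c) = (r:ℂ) * ((starRingEnd ℂ) c * c) := by ring
  rw [h, ← Complex.normSq_eq_conj_mul_self, ← Complex.ofReal_mul, Complex.ofReal_re,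
    Complex.normSq_eq_norm_sq]

lemma stmt13_conj_mul_re' (c : ℂ) : ((starRingEnd ℂ) c * c).re = ‖c‖ ^ 2 := by
  have := stmt13_conj_mul_re c 1; simpa using this

section aux
variable {n : ℕ} {x : Fin n → EuclideanSpace ℂ (Fin n)}

lemma stmt13_sum_coeff_smul (hx : Orthonormal ℂ x) (hn : 0 < n)
    (u : EuclideanSpace ℂ (Fin n)) :
    ∑ j, (inner ℂ (x j) u : ℂ) • x j = u := by
  haveI : Nonempty (Fin n) := ⟨⟨0, hn⟩⟩
  have hcard : Fintype.card (Fin n) = finrank ℂ (EuclideanSpace ℂ (Fin n)) := by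
    simp [finrank_euclideanSpace]
  have hsp : ⊤ ≤ Submodule.span ℂ (Set.range x) := by
    rw [← coe_basisOfLinearIndependentOfCardEqFinrank hx.linearIndependent hcard,
      Basis.span_eq]
  let B : OrthonormalBasis (Fin n) ℂ (EuclideanSpace ℂ (Fin n)) := .mk hx hsp
  have hB : ⇑B = x := OrthonormalBasis.coe_mk _ _
  have := B.sum_repr u
  simp_rw [B.repr_apply_apply, hB] at this
  exact this

lemma stmt13_inner_expand (hx : Orthonormal ℂ x) (hn : 0 < n)
    (u z : EuclideanSpace ℂ (Fin n)) :
    (inner ℂ u z : ℂ) = ∑ j, (starRingEnd ℂ) (inner ℂ (x j) u : ℂ) * (inner ℂ (x j) z : ℂ) := by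
  conv_lhs => rw [← stmt13_sum_coeff_smul hx hn u]
  rw [sum_inner]
  simp [inner_smul_left]

lemma stmt13_norm_sq_expand (hx : Orthonormal ℂ x) (hn : 0 < n)
    (u : EuclideanSpace ℂ (Fin n)) :
    ‖u‖ ^ 2 = ∑ j, ‖(inner ℂ (x j) u : ℂ)‖ ^ 2 := by
  have h2 : ((‖u‖ ^ 2 : ℝ) : ℂ) = (inner ℂ u u : ℂ) := by
    rw [Complex.ofReal_pow]; exact (inner_self_eq_norm_sq_to_K u).symm
  have h3 := congrArg Complex.re (h2.trans (stmt13_inner_expand hx hn u u))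
  rw [Complex.ofReal_re, Complex.re_sum] at h3
  rw [h3]
  exact Finset.sum_congr rfl fun j _ => stmt13_conj_mul_re' _

lemma stmt13_inner_toEuclideanLin (hx : Orthonormal ℂ x) (hn : 0 < n)
    {A : Matrix (Fin n) (Fin n) ℂ} {lam : Fin n → ℝ}
    (heig : ∀ j, Matrix.toEuclideanLin A (x j) = (lam j : ℂ) • x j)
    (u : EuclideanSpace ℂ (Fin n)) (k : Fin n) :
    (inner ℂ (x k) (Matrix.toEuclideanLin A u) : ℂ) = (lam k : ℂ) * (inner ℂ (x k) u : ℂ) := by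
  have horth := orthonormal_iff_ite.mp hx
  conv_lhs => rw [← stmt13_sum_coeff_smul hx hn u, map_sum]
  simp only [map_smul, heig, inner_sum, inner_smul_right, horth, smul_eq_mul, mul_ite,
    mul_one, mul_zero]
  simp [Finset.sum_ite_eq']
  ring

lemma stmt13_rayleigh_eq (hx : Orthonormal ℂ x) (hn : 0 < n)
    {A : Matrix (Fin n) (Fin n) ℂ} {lam : Fin n → ℝ}
    (heig : ∀ j, Matrix.toEuclideanLin A (x j) = (lam j : ℂ) • x j)
    (u : EuclideanSpace ℂ (Fin n)) :
    rayleigh A u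
      = (∑ j, lam j * ‖(inner ℂ (x j) u : ℂ)‖ ^ 2) / ∑ j, ‖(inner ℂ (x j) u : ℂ)‖ ^ 2 := by
  have hnum : ((inner ℂ u (Matrix.toEuclideanLin A u) : ℂ)).re
      = ∑ j, lam j * ‖(inner ℂ (x j) u : ℂ)‖ ^ 2 := by
    rw [stmt13_inner_expand hx hn u _, Complex.re_sum]
    refine Finset.sum_congr rfl fun j _ => ?_
    rw [stmt13_inner_toEuclideanLin hx hn heig u j, stmt13_conj_mul_re]
  rw [rayleigh, hnum, stmt13_norm_sq_expand hx hn u]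

lemma stmt13_inner_matFun (hx : Orthonormal ℂ x) (lam : Fin n → ℝ) (f : ℝ → ℝ)
    (w : EuclideanSpace ℂ (Fin n)) (k : Fin n) :
    (inner ℂ (x k) (matFun lam x f w) : ℂ) = (f (lam k) : ℂ) * (inner ℂ (x k) w : ℂ) := by
  have horth := orthonormal_iff_ite.mp hx
  simp only [matFun, LinearMap.sum_apply, LinearMap.smul_apply, LinearMap.smulRight_apply,
    LinearMap.coe_coe, innerSL_apply_apply, inner_sum, inner_smul_right, horth, mul_ite,
    mul_one, mul_zero]
  simp

lemma stmt13_sum_shift {n : ℕ} (lam E : Fin n → ℝ) (a : ℝ) :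
    ∑ j, (lam j - a) * E j = (∑ j, lam j * E j) - a * ∑ j, E j := by
  rw [Finset.mul_sum, ← Finset.sum_sub_distrib]
  exact Finset.sum_congr rfl fun j _ => by ring

lemma stmt13_sum_shift' {n : ℕ} (lam E : Fin n → ℝ) (a : ℝ) :
    ∑ j, (a - lam j) * E j = a * (∑ j, E j) - ∑ j, lam j * E j := by
  rw [Finset.mul_sum, ← Finset.sum_sub_distrib]
  exact Finset.sum_congr rfl fun j _ => by ring

lemma stmt13_rayleigh_bounds (hx : Orthonormal ℂ x) (hn : 0 < n)
    {A : Matrix (Fin n) (Fin n) ℂ} {lam : Fin n → ℝ} (hlam : Antitone lam)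
    (heig : ∀ j, Matrix.toEuclideanLin A (x j) = (lam j : ℂ) • x j)
    (u : EuclideanSpace ℂ (Fin n)) (hu : u ≠ 0) :
    lam ⟨n-1, by omega⟩ ≤ rayleigh A u ∧ rayleigh A u ≤ lam ⟨0, hn⟩ := by
  have hE : 0 < ∑ j, ‖(inner ℂ (x j) u : ℂ)‖ ^ 2 := by
    rw [← stmt13_norm_sq_expand hx hn u]
    exact pow_pos (norm_pos_iff.mpr hu) 2
  rw [stmt13_rayleigh_eq hx hn heig u]
  constructor
  · rw [le_div_iff₀ hE, Finset.mul_sum]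
    refine Finset.sum_le_sum fun j _ => ?_
    exact mul_le_mul_of_nonneg_right
      (hlam (by simp [Fin.le_def]; omega)) (by positivity)
  · rw [div_le_iff₀ hE, Finset.mul_sum]
    refine Finset.sum_le_sum fun j _ => ?_
    exact mul_le_mul_of_nonneg_right
      (hlam (by simp [Fin.le_def])) (by positivity)

lemma stmt13_ritz_bddAbove (hx : Orthonormal ℂ x) (hn : 0 < n)
    {A : Matrix (Fin n) (Fin n) ℂ} {lam : Fin n → ℝ} (hlam : Antitone lam)
    (heig : ∀ j, Matrix.toEuclideanLin A (x j) = (lam j : ℂ) • x j)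
    (S : Submodule ℂ (EuclideanSpace ℂ (Fin n))) (k : ℕ) (hk : 1 ≤ k) :
    BddAbove {r : ℝ | ∃ T : Submodule ℂ (EuclideanSpace ℂ (Fin n)), T ≤ S ∧
      Module.finrank ℂ T = k ∧ ∀ v ∈ T, v ≠ 0 → r ≤ rayleigh A v} := by
  refine ⟨lam ⟨0, hn⟩, ?_⟩
  rintro r ⟨T, hTS, hTrank, hb⟩
  have hT : T ≠ ⊥ := by
    intro h
    rw [h, finrank_bot] at hTrank
    omega
  obtain ⟨v, hvT, hv0⟩ := Submodule.exists_mem_ne_zero_of_ne_bot hT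
  exact (hb v hvT hv0).trans (stmt13_rayleigh_bounds hx hn hlam heig v hv0).2

lemma stmt13_le_ritz (hx : Orthonormal ℂ x) (hn : 0 < n)
    {A : Matrix (Fin n) (Fin n) ℂ} {lam : Fin n → ℝ} (hlam : Antitone lam)
    (heig : ∀ j, Matrix.toEuclideanLin A (x j) = (lam j : ℂ) • x j)
    {S T : Submodule ℂ (EuclideanSpace ℂ (Fin n))} {k : ℕ} (hk : 1 ≤ k)
    (hTS : T ≤ S) (hTrank : Module.finrank ℂ T = k) {c : ℝ}
    (hb : ∀ v ∈ T, v ≠ 0 → c ≤ rayleigh A v) :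
    c ≤ ritzValue A S k :=
  le_csSup (stmt13_ritz_bddAbove hx hn hlam heig S k hk) ⟨T, hTS, hTrank, hb⟩

lemma stmt13_ritz_le (hx : Orthonormal ℂ x) (hn : 0 < n)
    {A : Matrix (Fin n) (Fin n) ℂ} {lam : Fin n → ℝ} (hlam : Antitone lam)
    (heig : ∀ j, Matrix.toEuclideanLin A (x j) = (lam j : ℂ) • x j)
    {S : Submodule ℂ (EuclideanSpace ℂ (Fin n))} {k : ℕ}
    (hS : Module.finrank ℂ S = k) {w : EuclideanSpace ℂ (Fin n)}
    (hw : w ∈ S) (hw0 : w ≠ 0) :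
    ritzValue A S k ≤ rayleigh A w := by
  refine csSup_le ⟨lam ⟨n-1, by omega⟩, S, le_rfl, hS, fun v hv hv0 =>
    (stmt13_rayleigh_bounds hx hn hlam heig v hv0).1⟩ ?_
  rintro r ⟨T, hTS, hTrank, hb⟩
  have hTS' : T = S := Submodule.eq_of_le_of_finrank_le hTS (by rw [hS, hTrank])
  exact hb w (hTS' ▸ hw) hw0

end aux

lemma stmt13_finrank_map {n : ℕ} (F : EuclideanSpace ℂ (Fin n) →ₗ[ℂ] EuclideanSpace ℂ (Fin n))
    (S : Submodule ℂ (EuclideanSpace ℂ (Fin n)))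
    (h : ∀ w ∈ S, F w = 0 → w = 0) :
    Module.finrank ℂ (S.map F) = Module.finrank ℂ S := by
  have hinj : Function.Injective (F.comp S.subtype) := by
    rw [← LinearMap.ker_eq_bot, LinearMap.ker_eq_bot']
    intro m hm
    exact Subtype.ext (h m.1 m.2 hm)
  have h2 := LinearMap.finrank_range_of_inj hinj
  rwa [LinearMap.range_comp, Submodule.range_subtype] at h2

lemma stmt13_exists_sub {n : ℕ} (S : Submodule ℂ (EuclideanSpace ℂ (Fin n))) (i : ℕ)
    (h : i ≤ Module.finrank ℂ S) :
    ∃ T : Submodule ℂ (EuclideanSpace ℂ (Fin n)), T ≤ S ∧ Module.finrank ℂ T = i := by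
  let b := Module.finBasis ℂ S
  let vecs : Fin i → EuclideanSpace ℂ (Fin n) := fun j => (b (Fin.castLE h j) : _)
  have h1 : LinearIndependent ℂ (fun j : Fin (finrank ℂ S) => ((b j : S) : EuclideanSpace ℂ (Fin n))) :=
    b.linearIndependent.map' S.subtype (Submodule.ker_subtype S)
  have hli : LinearIndependent ℂ vecs := h1.comp (Fin.castLE h) (Fin.castLE_injective h)
  refine ⟨Submodule.span ℂ (Set.range vecs), ?_, ?_⟩
  · rw [Submodule.span_le]
    rintro _ ⟨j, rfl⟩
    exact (b (Fin.castLE h j)).2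
  · rw [finrank_span_eq_card hli, Fintype.card_fin]

set_option maxHeartbeats 1000000 in
lemma stmt13_core {n q0 t : ℕ} (hq0t : q0 < t) (htn : t < n)
    (lam g e : Fin n → ℝ) (hlam : Antitone lam)
    (he : ∀ j, 0 ≤ e j)
    (hmid : ∀ j : Fin n, q0 < (j:ℕ) → (j:ℕ) < t → e j = 0)
    (gq ν2 : ℝ)
    (hhead : ∀ j : Fin n, (j:ℕ) ≤ q0 → gq ≤ g j)
    (htail : ∀ j : Fin n, t ≤ (j:ℕ) → 0 ≤ g j ∧ g j ≤ ν2)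
    (hν2 : 0 ≤ ν2) (hν2gq : ν2 ≤ gq) (hgqpos : 0 < gq)
    (hDw : 0 < ∑ j, (lam j - lam ⟨t, htn⟩) * e j) :
    (gq * ∑ j, (lam j - lam ⟨t, htn⟩) * e j
        ≤ ∑ j, (lam j - lam ⟨t, htn⟩) * (g j * e j)) ∧
    ((∑ j, (lam ⟨q0, by omega⟩ - lam j) * e j) ≤ 0 →
        ∑ j, (lam ⟨q0, by omega⟩ - lam j) * (g j * e j) ≤ 0) ∧
    (0 < ∑ j, (lam ⟨q0, by omega⟩ - lam j) * (g j * e j) →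
      gq * (∑ j, (lam ⟨q0, by omega⟩ - lam j) * (g j * e j))
          * (∑ j, (lam j - lam ⟨t, htn⟩) * e j)
        ≤ ν2 * (∑ j, (lam ⟨q0, by omega⟩ - lam j) * e j)
          * (∑ j, (lam j - lam ⟨t, htn⟩) * (g j * e j))) := by
  set μ := lam ⟨t, htn⟩ with hμ
  set lq := lam ⟨q0, by omega⟩ with hlq
  set hd : Finset (Fin n) := univ.filter (fun j => (j:ℕ) ≤ q0) with hhd
  set tl : Finset (Fin n) := univ.filter (fun j => t ≤ (j:ℕ)) with htl
  have key : ∀ E : Fin n → ℝ, (∀ j : Fin n, q0 < (j:ℕ) → (j:ℕ) < t → E j = 0) →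
      ∀ F : Fin n → ℝ, ∑ j, F j * E j
        = (∑ j ∈ hd, F j * E j) + ∑ j ∈ tl, F j * E j := by
    intro E hE F
    have h1 := Finset.sum_filter_add_sum_filter_not Finset.univ
      (fun j : Fin n => (j:ℕ) ≤ q0) (fun j => F j * E j)
    have h2 := Finset.sum_filter_add_sum_filter_not
      (Finset.univ.filter (fun j : Fin n => ¬ (j:ℕ) ≤ q0))
      (fun j : Fin n => t ≤ (j:ℕ)) (fun j => F j * E j)
    have h3 : (Finset.univ.filter (fun j : Fin n => ¬ (j:ℕ) ≤ q0)).filter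
        (fun j : Fin n => t ≤ (j:ℕ)) = tl := by
      rw [Finset.filter_filter, htl]
      apply Finset.filter_congr
      intro j _
      omega
    have h4 : ∑ j ∈ (Finset.univ.filter (fun j : Fin n => ¬ (j:ℕ) ≤ q0)).filter
        (fun j : Fin n => ¬ t ≤ (j:ℕ)), F j * E j = 0 := by
      refine Finset.sum_eq_zero fun j hj => ?_
      simp only [Finset.mem_filter] at hj
      rw [hE j (by omega) (by omega), mul_zero]
    rw [h3, h4] at h2
    rw [← h1, ← h2]
    ring
  have hE' : ∀ j : Fin n, q0 < (j:ℕ) → (j:ℕ) < t → g j * e j = 0 := fun j h1 h2 => by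
    rw [hmid j h1 h2, mul_zero]
  set P := ∑ j ∈ hd, (lam j - lq) * e j with hP
  set Q := ∑ j ∈ tl, (lq - lam j) * e j with hQ
  set h1 := ∑ j ∈ hd, (lam j - μ) * e j with hh1
  set t1 := ∑ j ∈ tl, (μ - lam j) * e j with ht1
  set P' := ∑ j ∈ hd, (lam j - lq) * (g j * e j) with hP'
  set Q' := ∑ j ∈ tl, (lq - lam j) * (g j * e j) with hQ'
  set h1' := ∑ j ∈ hd, (lam j - μ) * (g j * e j) with hh1'
  set t1' := ∑ j ∈ tl, (μ - lam j) * (g j * e j) with ht1'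
  have hdlam : ∀ j ∈ hd, lq ≤ lam j := by
    intro j hj
    simp only [hhd, Finset.mem_filter] at hj
    exact hlam (by simpa [Fin.le_def] using hj.2)
  have hdlam2 : ∀ j ∈ hd, μ ≤ lam j := by
    intro j hj
    simp only [hhd, Finset.mem_filter] at hj
    exact hlam (by simp [Fin.le_def]; omega)
  have htlam : ∀ j ∈ tl, lam j ≤ μ := by
    intro j hj
    simp only [htl, Finset.mem_filter] at hj
    exact hlam (by simpa [Fin.le_def] using hj.2)
  have htlam2 : ∀ j ∈ tl, lam j ≤ lq := by
    intro j hj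
    simp only [htl, Finset.mem_filter] at hj
    exact hlam (by simp [Fin.le_def]; omega)
  have hPn : 0 ≤ P := Finset.sum_nonneg fun j hj =>
    mul_nonneg (by linarith [hdlam j hj]) (he j)
  have hQn : 0 ≤ Q := Finset.sum_nonneg fun j hj =>
    mul_nonneg (by linarith [htlam2 j hj]) (he j)
  have hh1n : 0 ≤ h1 := Finset.sum_nonneg fun j hj =>
    mul_nonneg (by linarith [hdlam2 j hj]) (he j)
  have ht1n : 0 ≤ t1 := Finset.sum_nonneg fun j hj =>
    mul_nonneg (by linarith [htlam j hj]) (he j)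
  have hPc : gq * P ≤ P' := by
    rw [hP, hP', Finset.mul_sum]
    refine Finset.sum_le_sum fun j hj => ?_
    have h1 := hdlam j hj
    have h2 := hhead j (by simpa [hhd, Finset.mem_filter] using hj)
    nlinarith [mul_nonneg (mul_nonneg (sub_nonneg.2 h2) (sub_nonneg.2 h1)) (he j)]
  have hh1c : gq * h1 ≤ h1' := by
    rw [hh1, hh1', Finset.mul_sum]
    refine Finset.sum_le_sum fun j hj => ?_
    have h1 := hdlam2 j hj
    have h2 := hhead j (by simpa [hhd, Finset.mem_filter] using hj)
    nlinarith [mul_nonneg (mul_nonneg (sub_nonneg.2 h2) (sub_nonneg.2 h1)) (he j)]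
  have hQc : Q' ≤ ν2 * Q := by
    rw [hQ, hQ', Finset.mul_sum]
    refine Finset.sum_le_sum fun j hj => ?_
    have h1 := htlam2 j hj
    have h2 := htail j (by simpa [htl, Finset.mem_filter] using hj)
    nlinarith [mul_nonneg (mul_nonneg (sub_nonneg.2 h2.2) (sub_nonneg.2 h1)) (he j)]
  have ht1c : t1' ≤ ν2 * t1 := by
    rw [ht1, ht1', Finset.mul_sum]
    refine Finset.sum_le_sum fun j hj => ?_
    have h1 := htlam j hj
    have h2 := htail j (by simpa [htl, Finset.mem_filter] using hj)
    nlinarith [mul_nonneg (mul_nonneg (sub_nonneg.2 h2.2) (sub_nonneg.2 h1)) (he j)]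
  have ht1n' : 0 ≤ t1' := Finset.sum_nonneg fun j hj =>
    mul_nonneg (by linarith [htlam j hj])
      (mul_nonneg (htail j (by simpa [htl, Finset.mem_filter] using hj)).1 (he j))
  have hneg : ∀ (s : Finset (Fin n)) (a : ℝ) (E : Fin n → ℝ),
      (∑ j ∈ s, (lam j - a) * E j) + (∑ j ∈ s, (a - lam j) * E j) = 0 := by
    intro s a E
    rw [← Finset.sum_add_distrib]
    exact Finset.sum_eq_zero fun j _ => by ring
  have hDwd : ∑ j, (lam j - μ) * e j = h1 - t1 := by
    rw [key e hmid (fun j => lam j - μ)]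
    have := hneg tl μ e
    rw [hh1, ht1]; linarith
  have hNwd : ∑ j, (lq - lam j) * e j = Q - P := by
    rw [key e hmid (fun j => lq - lam j)]
    have := hneg hd lq e
    rw [hP, hQ]; linarith
  have hDvd : ∑ j, (lam j - μ) * (g j * e j) = h1' - t1' := by
    rw [key _ hE' (fun j => lam j - μ)]
    have := hneg tl μ (fun j => g j * e j)
    rw [hh1', ht1']; linarith
  have hNvd : ∑ j, (lq - lam j) * (g j * e j) = Q' - P' := by
    rw [key _ hE' (fun j => lq - lam j)]
    have := hneg hd lq (fun j => g j * e j)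
    rw [hP', hQ']; linarith
  rw [hDwd] at hDw
  rw [hDwd, hNwd, hDvd, hNvd]
  refine ⟨by nlinarith, fun hNw => by nlinarith, fun hNv => ?_⟩
  have hNt : 0 < ν2 * Q - gq * P := by nlinarith
  have hNwpos : 0 < Q - P := by nlinarith
  have hDst : gq * (h1 - t1) ≤ gq * h1 - ν2 * t1 := by nlinarith
  have hDv : gq * h1 - ν2 * t1 ≤ h1' - t1' := by nlinarith
  have hid : gq * (ν2 * Q - gq * P) * (h1 - t1) ≤ ν2 * (Q - P) * (gq * h1 - ν2 * t1) := by
    nlinarith [mul_nonneg (mul_nonneg (sub_nonneg.mpr hν2gq) hν2)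
        (mul_nonneg ht1n (le_of_lt hNwpos)),
      mul_nonneg (mul_nonneg (sub_nonneg.mpr hν2gq) hgqpos.le) (mul_nonneg hPn hDw.le)]
  have e1 : Q' - P' ≤ ν2 * Q - gq * P := by linarith
  have e2 := mul_le_mul_of_nonneg_right e1 (mul_pos hgqpos hDw).le
  have e3 := mul_le_mul_of_nonneg_left hDv (mul_nonneg hν2 hNwpos.le)
  calc gq * (Q' - P') * (h1 - t1) ≤ gq * (ν2 * Q - gq * P) * (h1 - t1) := by nlinarith [e2]
    _ ≤ ν2 * (Q - P) * (gq * h1 - ν2 * t1) := hid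
    _ ≤ ν2 * (Q - P) * (h1' - t1') := by nlinarith [e3]

set_option maxHeartbeats 4000000 in
/-- (Theorem 3.4.) If `η_p > λ_{t+1}` and
`|f(λ₁)| ≥ ⋯ ≥ |f(λ_t)| > max_{j>t}|f(λ_j)| = ν_t`, then `𝒴' = f(A)𝒴` has
dimension `p` and its `i`-th largest Ritz value `η'_i` satisfies: either
`η'_i ≥ λ_{t−p+i}`, or
`0 < (λ_{t−p+i} − η'_i)/(η'_i − λ_{t+1}) ≤ (ν_t²/|f(λ_{t−p+i})|²)·(λ_{t−p+i} − η_p)/(η_p − λ_{t+1})`.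
(0-indexed: `lam ⟨j⟩` is `λ_{j+1}`.) -/
theorem stmt13 {n p i t : ℕ} (hi : 1 ≤ i) (hip : i ≤ p)
    (hpt : p ≤ t) (htn : t < n)
    (A : Matrix (Fin n) (Fin n) ℂ) (hA : A.IsHermitian)
    (lam : Fin n → ℝ) (hlam : Antitone lam)
    (x : Fin n → EuclideanSpace ℂ (Fin n)) (hx : Orthonormal ℂ x)
    (heig : ∀ j, Matrix.toEuclideanLin A (x j) = (lam j : ℂ) • x j)
    (Y : Submodule ℂ (EuclideanSpace ℂ (Fin n))) (hY : Module.finrank ℂ Y = p)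
    (hηp : lam ⟨t, htn⟩ < ritzValue A Y p)
    (f : ℝ → ℝ) (νt : ℝ)
    (hνt : IsGreatest ((fun j => |f (lam j)|) '' {j : Fin n | t ≤ (j : ℕ)}) νt)
    (hmono : ∀ j k : Fin n, (j : ℕ) ≤ (k : ℕ) → (k : ℕ) < t →
      |f (lam k)| ≤ |f (lam j)|)
    (hgt : νt < |f (lam ⟨t - 1, by omega⟩)|) :
    Module.finrank ℂ (Y.map (matFun lam x f)) = p ∧
    (lam ⟨t - p + i - 1, by omega⟩ ≤ ritzValue A (Y.map (matFun lam x f)) i ∨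
      (0 < (lam ⟨t - p + i - 1, by omega⟩ - ritzValue A (Y.map (matFun lam x f)) i) /
          (ritzValue A (Y.map (matFun lam x f)) i - lam ⟨t, htn⟩) ∧
        (lam ⟨t - p + i - 1, by omega⟩ - ritzValue A (Y.map (matFun lam x f)) i) /
            (ritzValue A (Y.map (matFun lam x f)) i - lam ⟨t, htn⟩) ≤
          νt ^ 2 / |f (lam ⟨t - p + i - 1, by omega⟩)| ^ 2 *
            ((lam ⟨t - p + i - 1, by omega⟩ - ritzValue A Y p) /
              (ritzValue A Y p - lam ⟨t, htn⟩)))) := by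

  classical
  have hn : 0 < n := by omega
  have hq0t : t - p + i - 1 < t := by omega
  set F := matFun lam x f with hFdef
  set μ : ℝ := lam ⟨t, htn⟩ with hμdef
  set lq : ℝ := lam ⟨t - p + i - 1, by omega⟩ with hlqdef
  set ηp : ℝ := ritzValue A Y p with hηpdef
  -- ν facts
  obtain ⟨hνmem, hνub⟩ := hνt
  obtain ⟨jν, hjν, hjνeq⟩ := hνmem
  have hνnn : 0 ≤ νt := hjνeq ▸ abs_nonneg _
  have habs : ∀ j : Fin n, t ≤ (j:ℕ) → |f (lam j)| ≤ νt := fun j hj =>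
    hνub ⟨j, hj, rfl⟩
  set g : Fin n → ℝ := fun j => f (lam j) ^ 2 with hgdef
  set gq : ℝ := f (lam ⟨t - p + i - 1, by omega⟩) ^ 2 with hgqdef
  have habs_q : νt < |f (lam ⟨t - p + i - 1, by omega⟩)| :=
    lt_of_lt_of_le hgt (hmono ⟨t - p + i - 1, by omega⟩ ⟨t-1, by omega⟩
      (by simp; omega) (by simp; omega))
  have hgq_abs : |f (lam ⟨t - p + i - 1, by omega⟩)| ^ 2 = gq := sq_abs _
  have hgqpos : 0 < gq := by
    rw [← hgq_abs]
    have : 0 < |f (lam ⟨t - p + i - 1, by omega⟩)| := lt_of_le_of_lt hνnn habs_q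
    positivity
  have hν2gq : νt ^ 2 ≤ gq := by
    rw [← hgq_abs]
    exact pow_le_pow_left₀ hνnn habs_q.le 2
  have hhead : ∀ j : Fin n, (j:ℕ) ≤ t - p + i - 1 → gq ≤ g j := by
    intro j hj
    have h := hmono j ⟨t - p + i - 1, by omega⟩ (by simpa using hj) (by simp; omega)
    calc gq = |f (lam ⟨t - p + i - 1, by omega⟩)| ^ 2 := hgq_abs.symm
      _ ≤ |f (lam j)| ^ 2 := pow_le_pow_left₀ (abs_nonneg _) h 2
      _ = g j := sq_abs _
  have htail : ∀ j : Fin n, t ≤ (j:ℕ) → 0 ≤ g j ∧ g j ≤ νt ^ 2 := by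
    intro j hj
    refine ⟨sq_nonneg _, ?_⟩
    calc g j = |f (lam j)| ^ 2 := (sq_abs _).symm
      _ ≤ νt ^ 2 := pow_le_pow_left₀ (abs_nonneg _) (habs j hj) 2
  -- mid finset and orthogonal complement M
  set mid : Finset (Fin n) :=
    Finset.univ.filter (fun j => t - p + i - 1 < (j:ℕ) ∧ (j:ℕ) < t) with hmiddef
  have hmidcard : mid.card = p - i := by
    have himg : mid.image (Fin.val) = Finset.Ioo (t - p + i - 1) t := by
      ext m
      simp only [Finset.mem_image, hmiddef, Finset.mem_filter, Finset.mem_univ, true_and,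
        Finset.mem_Ioo]
      constructor
      · rintro ⟨a, ⟨h1, h2⟩, rfl⟩; exact ⟨h1, h2⟩
      · rintro ⟨h1, h2⟩; exact ⟨⟨m, by omega⟩, ⟨h1, h2⟩, rfl⟩
    have := Finset.card_image_of_injective mid Fin.val_injective
    rw [himg, Nat.card_Ioo] at this
    omega
  set M : Submodule ℂ (EuclideanSpace ℂ (Fin n)) :=
    (Submodule.span ℂ (Set.range (fun j : ↥mid => x (j : Fin n))))ᗮ with hMdef
  have horthfam : Orthonormal ℂ (fun j : ↥mid => x (j : Fin n)) :=
    hx.comp _ Subtype.val_injective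
  have hMrank : Module.finrank ℂ M = n - (p - i) := by
    have h1 : Module.finrank ℂ (Submodule.span ℂ (Set.range (fun j : ↥mid => x (j : Fin n))))
        = p - i := by
      rw [finrank_span_eq_card horthfam.linearIndependent, Fintype.card_coe, hmidcard]
    have h2 := Submodule.finrank_add_finrank_orthogonal
      (K := Submodule.span ℂ (Set.range (fun j : ↥mid => x (j : Fin n))))
    rw [h1, finrank_euclideanSpace, Fintype.card_fin, ← hMdef] at h2
    omega
  set W := Y ⊓ M with hWdef
  have hWrank : i ≤ Module.finrank ℂ W := by
    have h1 := Submodule.finrank_sup_add_finrank_inf_eq Y M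
    have h2 : Module.finrank ℂ ↥(Y ⊔ M) ≤ n := by
      have := Submodule.finrank_le (Y ⊔ M)
      rwa [finrank_euclideanSpace, Fintype.card_fin] at this
    rw [hY, hMrank, ← hWdef] at h1
    omega
  have hMcoeff : ∀ w ∈ M, ∀ j : Fin n, t - p + i - 1 < (j:ℕ) → (j:ℕ) < t →
      (inner ℂ (x j) w : ℂ) = 0 := by
    intro w hw j h1 h2
    have hxj : x j ∈ Submodule.span ℂ (Set.range (fun j : ↥mid => x (j : Fin n))) :=
      Submodule.subset_span ⟨⟨j, by simp [hmiddef]; omega⟩, rfl⟩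
    exact (Submodule.mem_orthogonal _ w).mp hw (x j) hxj
  -- Rayleigh quotients on Y are at least ηp
  have hray_ge : ∀ w ∈ Y, w ≠ 0 → ηp ≤ rayleigh A w := fun w hw hw0 =>
    stmt13_ritz_le hx hn hlam heig hY hw hw0
  -- injectivity of F on Y
  have hfne : ∀ j : Fin n, (j:ℕ) < t → f (lam j) ≠ 0 := by
    intro j hj
    have h1 : νt < |f (lam j)| :=
      lt_of_lt_of_le hgt (hmono j ⟨t-1, by omega⟩ (by simp; omega) (by simp; omega))
    exact abs_pos.mp (lt_of_le_of_lt hνnn h1)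
  have hinj : ∀ w ∈ Y, F w = 0 → w = 0 := by
    intro w hwY hFw
    by_contra hw0
    have hc : ∀ j : Fin n, (j:ℕ) < t → (inner ℂ (x j) w : ℂ) = 0 := by
      intro j hj
      have h0 : (inner ℂ (x j) (F w) : ℂ) = 0 := by rw [hFw]; exact inner_zero_right _
      rw [hFdef, stmt13_inner_matFun hx] at h0
      rcases mul_eq_zero.mp h0 with h | h
      · exact absurd (by exact_mod_cast h) (hfne j hj)
      · exact h
    have hE : 0 < ∑ j, ‖(inner ℂ (x j) w : ℂ)‖ ^ 2 := by
      rw [← stmt13_norm_sq_expand hx hn w]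
      exact pow_pos (norm_pos_iff.mpr hw0) 2
    have hρ : μ < rayleigh A w := lt_of_lt_of_le hηp (hray_ge w hwY hw0)
    rw [stmt13_rayleigh_eq hx hn heig w, lt_div_iff₀ hE] at hρ
    have hle : ∑ j, lam j * ‖(inner ℂ (x j) w : ℂ)‖ ^ 2
        ≤ μ * ∑ j, ‖(inner ℂ (x j) w : ℂ)‖ ^ 2 := by
      rw [Finset.mul_sum]
      refine Finset.sum_le_sum fun j _ => ?_
      by_cases hj : (j:ℕ) < t
      · rw [hc j hj]; simp
      · exact mul_le_mul_of_nonneg_right (hlam (by simp [Fin.le_def]; omega)) (by positivity)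
    linarith
  have hYmap : Module.finrank ℂ (Y.map F) = p := by
    rw [stmt13_finrank_map F Y hinj, hY]
  have hWinj : ∀ w ∈ W, F w = 0 → w = 0 := fun w hw =>
    hinj w (Submodule.mem_inf.mp hw).1
  have hWmap : i ≤ Module.finrank ℂ (W.map F) := by
    rw [stmt13_finrank_map F W hWinj]; exact hWrank
  obtain ⟨T, hTW, hTrank⟩ := stmt13_exists_sub (W.map F) i hWmap
  have hTY : T ≤ Y.map F := hTW.trans (Submodule.map_mono inf_le_left)
  -- the per-vector estimates
  have hkey : ∀ v ∈ T, v ≠ 0 →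
      ((lq ≤ ηp → lq ≤ rayleigh A v) ∧
       (ηp < lq →
         lq - rayleigh A v ≤ (νt ^ 2 / gq * ((lq - ηp) / (ηp - μ))) * (rayleigh A v - μ) ∧
         μ < rayleigh A v)) := by
    intro v hvT hv0
    obtain ⟨w, hwW, hwv⟩ := Submodule.mem_map.mp (hTW hvT)
    obtain ⟨hwY, hwM⟩ := Submodule.mem_inf.mp hwW
    have hw0 : w ≠ 0 := by rintro rfl; rw [map_zero] at hwv; exact hv0 hwv.symm
    subst hwv
    set e : Fin n → ℝ := fun j => ‖(inner ℂ (x j) w : ℂ)‖ ^ 2 with hedef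
    have he : ∀ j, 0 ≤ e j := fun j => by positivity
    have hmid' : ∀ j : Fin n, t - p + i - 1 < (j:ℕ) → (j:ℕ) < t → e j = 0 := by
      intro j h1 h2
      rw [hedef]
      simp [hMcoeff w hwM j h1 h2]
    have hEw : 0 < ∑ j, e j := by
      rw [hedef, ← stmt13_norm_sq_expand hx hn w]
      exact pow_pos (norm_pos_iff.mpr hw0) 2
    have hρw : ηp ≤ rayleigh A w := hray_ge w hwY hw0
    have hρw_eq : rayleigh A w = (∑ j, lam j * e j) / ∑ j, e j :=
      stmt13_rayleigh_eq hx hn heig w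
    have hSw : ηp * ∑ j, e j ≤ ∑ j, lam j * e j := by
      rw [hρw_eq, le_div_iff₀ hEw] at hρw
      exact hρw
    have hμηp : μ < ηp := hηp
    have hDw : 0 < ∑ j, (lam j - μ) * e j := by
      rw [stmt13_sum_shift]
      nlinarith
    obtain ⟨c1, c2, c3⟩ := stmt13_core hq0t htn lam g e hlam he hmid' gq (νt ^ 2)
      hhead htail (sq_nonneg νt) hν2gq hgqpos hDw
    -- coefficients of v = F w
    have hcoeffv : ∀ j, ‖(inner ℂ (x j) (F w) : ℂ)‖ ^ 2 = g j * e j := by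
      intro j
      rw [hFdef, stmt13_inner_matFun hx, norm_mul, mul_pow, hedef]
      congr 1
      rw [Complex.norm_real, Real.norm_eq_abs, sq_abs]
    have hEv : 0 < ∑ j, g j * e j := by
      have h := stmt13_norm_sq_expand hx hn (F w)
      rw [Finset.sum_congr rfl (fun j _ => hcoeffv j)] at h
      rw [← h]
      exact pow_pos (norm_pos_iff.mpr hv0) 2
    have hrayv : rayleigh A (F w) = (∑ j, lam j * (g j * e j)) / ∑ j, g j * e j := by
      rw [stmt13_rayleigh_eq hx hn heig (F w)]
      rw [Finset.sum_congr rfl (fun j _ => by rw [hcoeffv j]),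
        Finset.sum_congr rfl (fun j _ => hcoeffv j)]
    have hDv : 0 < ∑ j, (lam j - μ) * (g j * e j) :=
      lt_of_lt_of_le (mul_pos hgqpos hDw) c1
    constructor
    · -- Case I : lq ≤ ηp
      intro hI
      have hNw : ∑ j, (lq - lam j) * e j ≤ 0 := by
        rw [stmt13_sum_shift']
        nlinarith
      have hNv := c2 hNw
      rw [stmt13_sum_shift'] at hNv
      rw [hrayv, le_div_iff₀ hEv]
      linarith
    · -- Case II : ηp < lq
      intro hII
      have hμlq : μ ≤ lq := hlam (by simp [Fin.le_def]; omega)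
      have hNv_le : ∑ j, (lq - lam j) * (g j * e j)
          ≤ (νt ^ 2 / gq * ((lq - ηp) / (ηp - μ))) * ∑ j, (lam j - μ) * (g j * e j) := by
        rcases le_or_gt (∑ j, (lq - lam j) * (g j * e j)) 0 with hle | hpos
        · refine hle.trans (mul_nonneg (mul_nonneg (div_nonneg (sq_nonneg _) hgqpos.le)
            (div_nonneg (by linarith) (by linarith))) hDv.le)
        · have h3 := c3 hpos
          have hb : (∑ j, (lq - lam j) * e j) * (ηp - μ)
              ≤ (lq - ηp) * ∑ j, (lam j - μ) * e j := by
            rw [stmt13_sum_shift', stmt13_sum_shift]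
            nlinarith [mul_nonneg (by linarith [hSw] :
              (0:ℝ) ≤ ∑ j, lam j * e j - ηp * ∑ j, e j) (by linarith : (0:ℝ) ≤ lq - μ)]
          have hμη : (0:ℝ) < ηp - μ := by linarith
          have hm1 := mul_le_mul_of_nonneg_right h3 hμη.le
          have hm2 := mul_le_mul_of_nonneg_right
            (mul_le_mul_of_nonneg_left hb (sq_nonneg νt)) hDv.le
          have hstep : gq * (ηp - μ) * (∑ j, (lq - lam j) * (g j * e j))
              ≤ νt ^ 2 * (lq - ηp) * ∑ j, (lam j - μ) * (g j * e j) := by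
            have hcancel := le_of_mul_le_mul_right
              (by nlinarith [hm1, hm2] :
                (gq * (ηp - μ) * (∑ j, (lq - lam j) * (g j * e j))) * (∑ j, (lam j - μ) * e j)
                ≤ (νt ^ 2 * (lq - ηp) * ∑ j, (lam j - μ) * (g j * e j))
                    * (∑ j, (lam j - μ) * e j)) hDw
            exact hcancel
          have hrw : gq * (ηp - μ) *
              ((νt ^ 2 / gq * ((lq - ηp) / (ηp - μ))) * ∑ j, (lam j - μ) * (g j * e j))
              = νt ^ 2 * (lq - ηp) * ∑ j, (lam j - μ) * (g j * e j) := by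
            field_simp
          have := hstep.trans_eq hrw.symm
          exact le_of_mul_le_mul_left this (by positivity)
      constructor
      · -- translate to Rayleigh quotient form
        rw [hrayv]
        have hρEv : (∑ j, lam j * (g j * e j)) / (∑ j, g j * e j) * (∑ j, g j * e j)
            = ∑ j, lam j * (g j * e j) := div_mul_cancel₀ _ hEv.ne'
        rw [stmt13_sum_shift', stmt13_sum_shift] at hNv_le
        set ρ := (∑ j, lam j * (g j * e j)) / (∑ j, g j * e j) with hρdef
        set R' := νt ^ 2 / gq * ((lq - ηp) / (ηp - μ)) with hR'def
        have hfin : (lq - ρ) * (∑ j, g j * e j) ≤ (R' * (ρ - μ)) * (∑ j, g j * e j) := by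
          have hL : (lq - ρ) * (∑ j, g j * e j)
              = lq * (∑ j, g j * e j) - ∑ j, lam j * (g j * e j) := by
            rw [sub_mul, hρEv]
          have hRR : (R' * (ρ - μ)) * (∑ j, g j * e j)
              = R' * ((∑ j, lam j * (g j * e j)) - μ * ∑ j, g j * e j) := by
            rw [mul_assoc, sub_mul, hρEv]
          rw [hL, hRR]
          exact hNv_le
        exact le_of_mul_le_mul_right hfin hEv
      · rw [hrayv, lt_div_iff₀ hEv]
        rw [stmt13_sum_shift] at hDv
        linarith
  -- assemble
  refine ⟨hYmap, ?_⟩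
  by_cases hcase2 : lq ≤ ritzValue A (Y.map F) i
  · exact Or.inl hcase2
  · right
    push_neg at hcase2
    have hcase : ηp < lq := by
      by_contra hcon
      push_neg at hcon
      exact absurd (stmt13_le_ritz hx hn hlam heig hi hTY hTrank
        (fun v hv hv0 => (hkey v hv hv0).1 hcon)) (not_le.mpr hcase2)
    set η' := ritzValue A (Y.map F) i with hη'def
    set R : ℝ := νt ^ 2 / |f (lam ⟨t - p + i - 1, by omega⟩)| ^ 2 * ((lq - ηp) / (ηp - μ))
      with hRdef
    have hμηp : μ < ηp := hηp
    have hRR' : R = νt ^ 2 / gq * ((lq - ηp) / (ηp - μ)) := by rw [hRdef, hgq_abs]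
    have hRnn : 0 ≤ R := by
      rw [hRR']
      exact mul_nonneg (div_nonneg (sq_nonneg _) hgqpos.le)
        (div_nonneg (by linarith) (by linarith))
    have h1R : (0:ℝ) < 1 + R := by linarith
    have hs0 : (lq + R * μ) / (1 + R) ≤ η' := by
      refine stmt13_le_ritz hx hn hlam heig hi hTY hTrank ?_
      intro v hv hv0
      obtain ⟨hkey2, hμv⟩ := (hkey v hv hv0).2 hcase
      rw [← hRR'] at hkey2
      rw [div_le_iff₀ h1R]
      nlinarith [hkey2]
    have hμlq : μ ≤ lq := hlam (by simp [Fin.le_def]; omega)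
    have hlqμ : μ < lq := by
      rcases hμlq.lt_or_eq with h | h
      · exact h
      · exfalso
        have heq : (lq + R * μ) / (1 + R) = lq := by
          rw [← h]
          field_simp
        rw [heq] at hs0
        exact absurd hs0 (not_le.mpr hcase2)
    have hμη' : μ < η' := by
      refine lt_of_lt_of_le ?_ hs0
      rw [lt_div_iff₀ h1R]
      nlinarith
    have hratio := (div_le_iff₀ h1R).mp hs0
    constructor
    · exact div_pos (by linarith) (by linarith)
    · rw [div_le_iff₀ (by linarith : (0:ℝ) < η' - μ)]
      nlinarith [hratio]
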